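/- arXiv:1312.7069 — 4 statements merged into one kernel-verified Lean document; each statement's English description precedes it below -/
import Mathlib

section
/- Let 1 < α ≤ 2, β = 1 - α/2, and ξ ∈ [0, π]. Then the function g(β) = β·cos((1-β)ξ) - (1-β)·cos(βξ) is nondecreasing in β on [0, 1/2] and satisfies g(β) ≤ 0 for all β ∈ [0, 1/2]. -/
open Real

theorem g_monotone_nonpos (ξ : ℝ) (hξ : ξ ∈ Set.Icc 0 Real.pi) :
    MonotoneOn (fun β : ℝ => β * Real.cos ((1 - β) * ξ) - (1 - β) * Real.cos (β * ξ))
        (Set.Icc 0 (1 / 2)) ∧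
      ∀ β ∈ Set.Icc (0 : ℝ) (1 / 2),
        β * Real.cos ((1 - β) * ξ) - (1 - β) * Real.cos (β * ξ) ≤ 0 := by
  obtain ⟨hξ0, hξπ⟩ := hξ
  set f : ℝ → ℝ := fun β => β * Real.cos ((1 - β) * ξ) - (1 - β) * Real.cos (β * ξ) with hf
  have hderiv : ∀ b : ℝ, HasDerivAt f
      ((1 * Real.cos ((1 - b) * ξ) + b * (-Real.sin ((1 - b) * ξ) * ((0 - 1) * ξ)))
        - ((0 - 1) * Real.cos (b * ξ) + (1 - b) * (-Real.sin (b * ξ) * (1 * ξ)))) b := by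
    intro b
    have h1 : HasDerivAt (fun β : ℝ => (1 - β) * ξ) ((0 - 1) * ξ) b :=
      ((hasDerivAt_const b (1:ℝ)).sub (hasDerivAt_id b)).mul_const ξ
    have h2 : HasDerivAt (fun β : ℝ => β * ξ) (1 * ξ) b :=
      (hasDerivAt_id b).mul_const ξ
    have hc1 : HasDerivAt (fun β : ℝ => Real.cos ((1 - β) * ξ))
        (-Real.sin ((1 - b) * ξ) * ((0 - 1) * ξ)) b := h1.cos
    have hc2 : HasDerivAt (fun β : ℝ => Real.cos (β * ξ))
        (-Real.sin (b * ξ) * (1 * ξ)) b := h2.cos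
    have t1 : HasDerivAt (fun β : ℝ => β * Real.cos ((1 - β) * ξ))
        (1 * Real.cos ((1 - b) * ξ) + b * (-Real.sin ((1 - b) * ξ) * ((0 - 1) * ξ))) b :=
      (hasDerivAt_id b).mul hc1
    have t2 : HasDerivAt (fun β : ℝ => (1 - β) * Real.cos (β * ξ))
        ((0 - 1) * Real.cos (b * ξ) + (1 - b) * (-Real.sin (b * ξ) * (1 * ξ))) b :=
      ((hasDerivAt_const b (1:ℝ)).sub (hasDerivAt_id b)).mul hc2
    exact t1.sub t2
  have hderivnn : ∀ b ∈ Set.Icc (0:ℝ) (1/2),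
      0 ≤ ((1 * Real.cos ((1 - b) * ξ) + b * (-Real.sin ((1 - b) * ξ) * ((0 - 1) * ξ)))
        - ((0 - 1) * Real.cos (b * ξ) + (1 - b) * (-Real.sin (b * ξ) * (1 * ξ)))) := by
    rintro b ⟨hb0, hb2⟩
    have hsin1 : 0 ≤ Real.sin ((1 - b) * ξ) := by
      apply Real.sin_nonneg_of_nonneg_of_le_pi
      · exact mul_nonneg (by linarith) hξ0
      · nlinarith
    have hsin2 : 0 ≤ Real.sin (b * ξ) := by
      apply Real.sin_nonneg_of_nonneg_of_le_pi
      · positivity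
      · nlinarith
    have hcos : 0 ≤ Real.cos ((1 - b) * ξ) + Real.cos (b * ξ) := by
      rw [Real.cos_add_cos]
      have h1 : ((1 - b) * ξ + b * ξ) / 2 = ξ / 2 := by ring
      have h2 : ((1 - b) * ξ - b * ξ) / 2 = (1 - 2 * b) * ξ / 2 := by ring
      rw [h1, h2]
      have hc1 : 0 ≤ Real.cos (ξ / 2) := by
        apply Real.cos_nonneg_of_mem_Icc
        constructor <;> [linarith; linarith]
      have hc2 : 0 ≤ Real.cos ((1 - 2 * b) * ξ / 2) := by
        apply Real.cos_nonneg_of_mem_Icc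
        constructor
        · nlinarith
        · nlinarith
      positivity
    nlinarith [mul_nonneg (mul_nonneg hb0 hsin1) hξ0,
      mul_nonneg (mul_nonneg (by linarith : (0:ℝ) ≤ 1 - b) hsin2) hξ0]
  have hmono : MonotoneOn f (Set.Icc 0 (1/2)) := by
    apply monotoneOn_of_deriv_nonneg (convex_Icc 0 (1/2))
    · exact fun b _ => ((hderiv b).continuousAt).continuousWithinAt
    · intro b _
      exact ((hderiv b).differentiableAt).differentiableWithinAt
    · intro b hb
      rw [interior_Icc] at hb
      rw [(hderiv b).deriv]
      exact hderivnn b ⟨le_of_lt hb.1, le_of_lt hb.2⟩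
  refine ⟨hmono, fun b hb => ?_⟩
  have h12 : (1/2 : ℝ) ∈ Set.Icc (0:ℝ) (1/2) := by norm_num
  have := hmono hb h12 hb.2
  have hval : f (1/2) = 0 := by
    simp only [hf]
    norm_num
  calc f b ≤ f (1/2) := this
    _ = 0 := hval
end

section
/- For β ∈ [0, 1/2) and ξ ∈ [0, π], the quantity (6β - 1)·cos((1-β)ξ) - (13 - 6β)·cos(βξ) is strictly negative. -/
open Real

theorem third_order_generating_neg (β ξ : ℝ) (hβ : β ∈ Set.Ico (0 : ℝ) (1 / 2))
    (hξ : ξ ∈ Set.Icc 0 Real.pi) :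
    (6 * β - 1) * Real.cos ((1 - β) * ξ) - (13 - 6 * β) * Real.cos (β * ξ) < 0 := by
  obtain ⟨hβ0, hβ2⟩ := hβ
  obtain ⟨hξ0, hξπ⟩ := hξ
  have hβξ0 : 0 ≤ β * ξ := mul_nonneg hβ0 hξ0
  have h1βξπ : (1 - β) * ξ ≤ Real.pi := by nlinarith
  have hle : β * ξ ≤ (1 - β) * ξ := by nlinarith
  have hmono : Real.cos ((1 - β) * ξ) ≤ Real.cos (β * ξ) :=
    Real.cos_le_cos_of_nonneg_of_le_pi hβξ0 h1βξπ hle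
  have hhalf : β * ξ < Real.pi / 2 := by nlinarith [Real.pi_pos]
  have hpos : 0 < Real.cos (β * ξ) :=
    Real.cos_pos_of_mem_Ioo ⟨by nlinarith [Real.pi_pos], hhalf⟩
  rcases le_or_gt (1/6 : ℝ) β with h | h
  · nlinarith
  · have hlt3 : β * ξ < Real.pi / 3 := by nlinarith [Real.pi_pos]
    have hc : Real.cos (Real.pi / 3) < Real.cos (β * ξ) :=
      Real.cos_lt_cos_of_nonneg_of_le_pi hβξ0 (by nlinarith [Real.pi_pos]) hlt3
    rw [Real.cos_pi_div_three] at hc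
    nlinarith [Real.neg_one_le_cos ((1 - β) * ξ)]
end

section
/- For β ∈ [0, 1/2) and ξ ∈ [0, π/2], the quantity -(β/2)cos((2-β)ξ) - (1 - β/2)cos(βξ) is strictly negative. -/
open Real

theorem second_order_generating_neg_first_half (β ξ : ℝ)
    (hβ : β ∈ Set.Ico (0 : ℝ) (1 / 2)) (hξ : ξ ∈ Set.Icc 0 (Real.pi / 2)) :
    -(β / 2) * Real.cos ((2 - β) * ξ) - (1 - β / 2) * Real.cos (β * ξ) < 0 := by
  obtain ⟨hβ0, hβ1⟩ := hβ
  obtain ⟨hξ0, hξ1⟩ := hξ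
  have hbx0 : 0 ≤ β * ξ := mul_nonneg hβ0 hξ0
  have hbx : β * ξ ≤ π / 4 := by
    have : β * ξ ≤ (1/2) * (π/2) := by
      apply mul_le_mul hβ1.le hξ1 hξ0 (by norm_num)
    linarith
  have hpi : π ≤ 4 := by linarith [Real.pi_le_four]
  have hc2 : Real.cos (π/4) ≤ Real.cos (β * ξ) :=
    Real.cos_le_cos_of_nonneg_of_le_pi hbx0 (by linarith) hbx
  rw [Real.cos_pi_div_four] at hc2
  have hs : (1.4:ℝ) < Real.sqrt 2 := by
    nlinarith [Real.sq_sqrt (by norm_num : (2:ℝ) ≥ 0), Real.sqrt_nonneg 2]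
  have hc1 : Real.cos ((2 - β) * ξ) ≤ 1 := Real.cos_le_one _
  nlinarith [Real.neg_one_le_cos ((2 - β) * ξ)]
end

section
/- For β ∈ [0, 1/2) and ξ ∈ [π/2, π], the quantity -(β/2)cos((2-β)ξ) - (1 - β/2)cos(βξ) is nonpositive. -/
open Real

theorem second_order_generating_nonpos_second_half (β ξ : ℝ)
    (hβ : β ∈ Set.Ico (0 : ℝ) (1 / 2)) (hξ : ξ ∈ Set.Icc (Real.pi / 2) Real.pi) :
    -(β / 2) * Real.cos ((2 - β) * ξ) - (1 - β / 2) * Real.cos (β * ξ) ≤ 0 := by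
  obtain ⟨hβ0, hβ2⟩ := hβ
  obtain ⟨hξ1, hξ2⟩ := hξ
  have hπ := Real.pi_pos
  have hξ0 : 0 ≤ ξ := le_trans (by positivity) hξ1
  set θ := (1/2 - β) * ξ with hθdef
  have hθ0 : 0 ≤ θ := mul_nonneg (by linarith) hξ0
  have hθπ : θ ≤ π/2 := by nlinarith
  have hc : 0 ≤ Real.cos θ := Real.cos_nonneg_of_mem_Icc ⟨by linarith, hθπ⟩
  have hs : 0 ≤ Real.sin θ := Real.sin_nonneg_of_nonneg_of_le_pi hθ0 (by linarith)
  have e1 : (2 - β) * ξ = 3 * (ξ/2) + θ := by rw [hθdef]; ring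
  have e2 : β * ξ = ξ/2 - θ := by rw [hθdef]; ring
  rw [e1, e2, Real.cos_add, Real.cos_sub, Real.cos_three_mul (ξ/2),
    Real.sin_three_mul (ξ/2)]
  set c := Real.cos (ξ/2) with hcdef
  set s := Real.sin (ξ/2) with hsdef
  have hcnn : 0 ≤ c := Real.cos_nonneg_of_mem_Icc ⟨by linarith, by linarith⟩
  have hsnn : 0 ≤ s := Real.sin_nonneg_of_nonneg_of_le_pi (by linarith) (by linarith)
  have hpyth : s^2 + c^2 = 1 := Real.sin_sq_add_cos_sq (ξ/2)
  have h1 : 0 ≤ Real.cos θ * c * (1 - 2*β*(1 - c^2)) := by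
    apply mul_nonneg (mul_nonneg hc hcnn)
    nlinarith [sq_nonneg c, sq_nonneg s]
  have h2 : 0 ≤ Real.sin θ * s * (1 - 2*β + 2*β*s^2) := by
    apply mul_nonneg (mul_nonneg hs hsnn)
    nlinarith [sq_nonneg s]
  nlinarith [h1, h2]
end
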